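/- Let (X, 𝒳) be a measurable space, φ : X → ℝ bounded measurable, and (X_n)_{n≥0}, (W_n)_{n≥0} two sequences of X-valued random elements on a common probability space such that: (i) X_n has the same law as W_{n+1} for every n ≥ 0; (ii) there is an ℕ-valued random variable τ with Σ_{n≥0} P(τ > n) < ∞ such that for every n, X_n = W_n almost surely on the event {τ ≤ n}; and (iii) E[φ(X_n)] → a as n → ∞ for some real a. Then for every k ≥ 0 the estimator φ(X_k) + Σ_{n=k+1}^{τ−1} (φ(X_n) − φ(W_n)) (the sum being empty when τ ≤ k+1) is integrable and has expectation a. -/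

import Mathlib

open MeasureTheory Filter

/-- unbiasedness of the coupled MCMC estimator
`φ(X_k) + ∑_{n=k+1}^{τ−1} (φ(X_n) − φ(W_n))`: if `Law(X_n) = Law(W_(n + 1))`,
the chains are faithful after the a.s. finite meeting time `τ` with summable
tails, and `E[φ(X_n)] → a`, then the estimator is integrable with mean `a`. -/
theorem coupled_mcmc_estimator_unbiased
    {Ω : Type*} [MeasurableSpace Ω] (P : Measure Ω) [IsProbabilityMeasure P]
    {X : Type*} [MeasurableSpace X]
    (φ : X → ℝ) (hφmeas : Measurable φ) (Cφ : ℝ) (hφbdd : ∀ x, |φ x| ≤ Cφ)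
    (Xs Ws : ℕ → Ω → X)
    (hXmeas : ∀ n, Measurable (Xs n)) (hWmeas : ∀ n, Measurable (Ws n))
    (hlaw : ∀ n : ℕ, Measure.map (Xs n) P = Measure.map (Ws (n + 1)) P)
    (τ : Ω → ℕ) (hτmeas : Measurable τ)
    (hτtail : Summable (fun n : ℕ => (P {ω | n < τ ω}).toReal))
    (hfaithful : ∀ n : ℕ, ∀ᵐ ω ∂P, τ ω ≤ n → Xs n ω = Ws n ω)
    (a : ℝ)
    (hconv : Tendsto (fun n => ∫ ω, φ (Xs n ω) ∂P) atTop (nhds a)) :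
    ∀ k : ℕ,
      Integrable (fun ω => φ (Xs k ω) +
        ∑ n ∈ Finset.Ico (k + 1) (τ ω), (φ (Xs n ω) - φ (Ws n ω))) P ∧
      ∫ ω, (φ (Xs k ω) +
        ∑ n ∈ Finset.Ico (k + 1) (τ ω), (φ (Xs n ω) - φ (Ws n ω))) ∂P = a := by
  intro k
  -- basic facts
  have hτset : ∀ n : ℕ, MeasurableSet {ω | n < τ ω} := fun n =>
    measurableSet_lt measurable_const hτmeas
  have hXint : ∀ n, Integrable (fun ω => φ (Xs n ω)) P := fun n =>
    (integrable_const Cφ).mono' ((hφmeas.comp (hXmeas n)).aestronglyMeasurable)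
      (Filter.Eventually.of_forall fun ω => by
        simpa [Real.norm_eq_abs] using hφbdd (Xs n ω))
  have hWint : ∀ n, Integrable (fun ω => φ (Ws n ω)) P := fun n =>
    (integrable_const Cφ).mono' ((hφmeas.comp (hWmeas n)).aestronglyMeasurable)
      (Filter.Eventually.of_forall fun ω => by
        simpa [Real.norm_eq_abs] using hφbdd (Ws n ω))
  -- the truncated difference
  set f : ℕ → Ω → ℝ := fun n ω => if n < τ ω then φ (Xs n ω) - φ (Ws n ω) else 0 with hfdef
  have hfmeas : ∀ n, Measurable (f n) := fun n =>
    Measurable.ite (hτset n)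
      ((hφmeas.comp (hXmeas n)).sub (hφmeas.comp (hWmeas n))) measurable_const
  have hfbd : ∀ n ω, ‖f n ω‖ ≤
      Set.indicator {ω | n < τ ω} (fun _ => 2 * Cφ) ω := by
    intro n ω
    by_cases h : n < τ ω
    · simp only [hfdef, if_pos h, Set.indicator_of_mem (show ω ∈ {ω | n < τ ω} from h)]
      calc ‖φ (Xs n ω) - φ (Ws n ω)‖ ≤ |φ (Xs n ω)| + |φ (Ws n ω)| := norm_sub_le _ _
        _ ≤ Cφ + Cφ := add_le_add (hφbdd _) (hφbdd _)
        _ = 2 * Cφ := by ring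
    · simp [hfdef, if_neg h, Set.indicator_of_notMem (show ω ∉ {ω | n < τ ω} from h)]
  have hindint : ∀ n : ℕ,
      Integrable (Set.indicator {ω | n < τ ω} (fun _ => 2 * Cφ)) P := fun n =>
    (integrable_const (2 * Cφ)).indicator (hτset n)
  have hfint : ∀ n, Integrable (f n) P := fun n =>
    (hindint n).mono' (hfmeas n).aestronglyMeasurable
      (Filter.Eventually.of_forall (hfbd n))
  have hfnorm : ∀ n, ∫ ω, ‖f n ω‖ ∂P ≤ (P {ω | n < τ ω}).toReal * (2 * Cφ) := by
    intro n
    calc ∫ ω, ‖f n ω‖ ∂P ≤ ∫ ω, Set.indicator {ω | n < τ ω} (fun _ => 2 * Cφ) ω ∂P :=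
          integral_mono (hfint n).norm (hindint n) (hfbd n)
      _ = (P {ω | n < τ ω}).toReal * (2 * Cφ) := by
          rw [integral_indicator_const _ (hτset n)]; simp [smul_eq_mul]; left; rfl
  -- summability of the norm integrals along n = k+1+m
  have hbsum : Summable (fun m : ℕ => (P {ω | (k + 1 + m) < τ ω}).toReal * (2 * Cφ)) := by
    have := (hτtail.mul_right (2 * Cφ)).comp_injective
      (add_right_injective (k + 1))
    exact this
  have hnormsum : Summable (fun m : ℕ => ∫ ω, ‖f (k + 1 + m) ω‖ ∂P) :=
    Summable.of_nonneg_of_le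
      (fun m => integral_nonneg fun ω => norm_nonneg _)
      (fun m => hfnorm (k + 1 + m)) hbsum
  -- the tail sum
  set T : Ω → ℝ := fun ω => ∑' m : ℕ, f (k + 1 + m) ω with hTdef
  have hfzero : ∀ (ω : Ω) (m : ℕ), m ∉ Finset.range (τ ω) → f (k + 1 + m) ω = 0 := by
    intro ω m hm
    rw [Finset.mem_range, not_lt] at hm
    exact if_neg (by omega)
  have hTfin : ∀ ω, T ω = ∑ m ∈ Finset.range (τ ω), f (k + 1 + m) ω := fun ω =>
    tsum_eq_sum (hfzero ω)
  -- T equals the estimator's sum, pointwise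
  have hpoint : ∀ ω, (∑ n ∈ Finset.Ico (k + 1) (τ ω), (φ (Xs n ω) - φ (Ws n ω))) = T ω := by
    intro ω
    have h1 : (∑ n ∈ Finset.Ico (k + 1) (τ ω), (φ (Xs n ω) - φ (Ws n ω)))
        = ∑ n ∈ Finset.Ico (k + 1) (τ ω), f n ω := by
      refine Finset.sum_congr rfl fun n hn => ?_
      rw [Finset.mem_Ico] at hn
      exact (if_pos hn.2).symm
    have h2 : (∑ n ∈ Finset.Ico (k + 1) (τ ω), f n ω)
        = ∑ n ∈ Finset.Ico (k + 1) (k + 1 + τ ω), f n ω := by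
      refine Finset.sum_subset (Finset.Ico_subset_Ico_right (by omega)) ?_
      intro n hn hn'
      rw [Finset.mem_Ico] at hn
      rw [Finset.mem_Ico] at hn'
      exact if_neg (by omega)
    have h3 : (∑ n ∈ Finset.Ico (k + 1) (k + 1 + τ ω), f n ω)
        = ∑ m ∈ Finset.range (τ ω), f (k + 1 + m) ω := by
      rw [Finset.sum_Ico_eq_sum_range]
      simp
    rw [h1, h2, h3, hTfin ω]
  -- measurability of T
  have hTmeas : Measurable T := by
    apply measurable_of_tendsto_metrizable
      (f := fun N ω => ∑ m ∈ Finset.range N, f (k + 1 + m) ω)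
      (fun N => Finset.measurable_sum _ fun m _ => hfmeas _)
    rw [tendsto_pi_nhds]
    intro ω
    have hev : ∀ᶠ N in atTop, (∑ m ∈ Finset.range N, f (k + 1 + m) ω) = T ω := by
      refine eventually_atTop.2 ⟨τ ω, fun N hN => ?_⟩
      rw [hTfin ω]
      exact (Finset.sum_subset (Finset.range_subset_range.2 hN)
        (fun m _ hm => hfzero ω m hm)).symm
    exact Tendsto.congr' (Filter.EventuallyEq.symm hev) tendsto_const_nhds
  -- integrability of T
  have hTint : Integrable T P := by
    refine ⟨hTmeas.aestronglyMeasurable, ?_⟩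
    show ∫⁻ ω, (‖T ω‖₊ : ENNReal) ∂P < ⊤
    have hsumm : ∀ ω, Summable (fun m => ‖f (k + 1 + m) ω‖₊) := fun ω =>
      summable_of_ne_finset_zero (s := Finset.range (τ ω))
        (fun m hm => by rw [hfzero ω m hm]; simp)
    have hle : ∫⁻ ω, (‖T ω‖₊ : ENNReal) ∂P
        ≤ ∑' m, ∫⁻ ω, (‖f (k + 1 + m) ω‖₊ : ENNReal) ∂P := by
      rw [← lintegral_tsum (fun m =>
        ((hfmeas (k + 1 + m)).nnnorm.coe_nnreal_ennreal).aemeasurable)]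
      refine lintegral_mono fun ω => ?_
      calc (‖T ω‖₊ : ENNReal) ≤ ((∑' m, ‖f (k + 1 + m) ω‖₊ : NNReal) : ENNReal) := by
            exact_mod_cast nnnorm_tsum_le (hsumm ω)
        _ = ∑' m, (‖f (k + 1 + m) ω‖₊ : ENNReal) := ENNReal.coe_tsum (hsumm ω)
    have heq : ∀ m : ℕ, ∫⁻ ω, (‖f (k + 1 + m) ω‖₊ : ENNReal) ∂P
        = ENNReal.ofReal (∫ ω, ‖f (k + 1 + m) ω‖ ∂P) := fun m =>
      (ofReal_integral_norm_eq_lintegral_enorm (hfint (k + 1 + m))).symm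
    refine lt_of_le_of_lt hle ?_
    simp_rw [heq]
    rw [← ENNReal.ofReal_tsum_of_nonneg
      (fun m => integral_nonneg fun ω => norm_nonneg _) hnormsum]
    exact ENNReal.ofReal_lt_top
  -- value of ∫ f n
  set b : ℕ → ℝ := fun n => ∫ ω, φ (Xs n ω) ∂P with hbdef
  have hWX : ∀ n : ℕ, ∫ ω, φ (Ws (n + 1) ω) ∂P = b n := by
    intro n
    rw [hbdef]
    rw [← integral_map (hWmeas (n + 1)).aemeasurable hφmeas.aestronglyMeasurable,
      ← hlaw n, integral_map (hXmeas n).aemeasurable hφmeas.aestronglyMeasurable]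
  have hfae : ∀ n, f n =ᵐ[P] fun ω => φ (Xs n ω) - φ (Ws n ω) := by
    intro n
    filter_upwards [hfaithful n] with ω hω
    by_cases h : n < τ ω
    · exact if_pos h
    · rw [hω (not_lt.1 h)]
      simp [hfdef, if_neg h]
  have hterm : ∀ m : ℕ, ∫ ω, f (k + 1 + m) ω ∂P = b (k + (m + 1)) - b (k + m) := by
    intro m
    have h1 : ∫ ω, f (k + 1 + m) ω ∂P
        = ∫ ω, (φ (Xs (k + 1 + m) ω) - φ (Ws (k + 1 + m) ω)) ∂P :=
      integral_congr_ae (hfae (k + 1 + m))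
    have h2 : (k + 1 + m) = (k + m) + 1 := by omega
    rw [h1, integral_sub (hXint _) (hWint _), h2, hWX (k + m)]
    congr 1
  have hpartial : ∀ N : ℕ,
      (∑ m ∈ Finset.range N, ∫ ω, f (k + 1 + m) ω ∂P) = b (k + N) - b (k + 0) := by
    intro N
    simp_rw [hterm]
    exact Finset.sum_range_sub (fun m => b (k + m)) N
  have hsumint : Summable (fun m : ℕ => ∫ ω, f (k + 1 + m) ω ∂P) :=
    Summable.of_norm_bounded hnormsum (fun m => norm_integral_le_integral_norm _)
  have htends : Tendsto (fun N => ∑ m ∈ Finset.range N, ∫ ω, f (k + 1 + m) ω ∂P)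
      atTop (nhds (a - b k)) := by
    have h1 : Tendsto (fun N => b (k + N)) atTop (nhds a) := by
      have := hconv.comp (tendsto_add_atTop_nat k)
      simpa [Function.comp_def, Nat.add_comm] using this
    have := h1.sub_const (b k)
    refine Tendsto.congr (fun N => ?_) this
    rw [hpartial N, Nat.add_zero]
  have htsum : (∑' m : ℕ, ∫ ω, f (k + 1 + m) ω ∂P) = a - b k :=
    tendsto_nhds_unique (hsumint.hasSum.tendsto_sum_nat) htends
  have hintT : ∫ ω, T ω ∂P = a - b k := by
    rw [hTdef]
    rw [← integral_tsum_of_summable_integral_norm (fun m => hfint (k + 1 + m)) hnormsum]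
    exact htsum
  -- conclusion
  have hestim : (fun ω => φ (Xs k ω) +
      ∑ n ∈ Finset.Ico (k + 1) (τ ω), (φ (Xs n ω) - φ (Ws n ω)))
      = fun ω => φ (Xs k ω) + T ω := by
    funext ω; rw [hpoint ω]
  rw [hestim]
  refine ⟨(hXint k).add hTint, ?_⟩
  rw [integral_add (hXint k) hTint, hintT]
  simp [hbdef]
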